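/- Let X be a Banach space, p ∈ [1,∞), τ > 0, and let g : [0,∞) → X be strongly measurable with ∫₀^∞ ‖g(t)‖^p dt < ∞, and such that t ↦ g(τt) f_n(t) is Bochner integrable on [0,∞) for every n ≥ 1, where f_n(t) := t^{n-1} e^{-t}/(n-1)!. Then ∑_{n=1}^∞ τ ‖∫₀^∞ g(τt) f_n(t) dt‖^p ≤ ∫₀^∞ ‖g(t)‖^p dt. -/

import Mathlib

open MeasureTheory

open scoped ENNReal

namespace JensenAux

lemma f_integrableOn (n : ℕ) :
    IntegrableOn (fun t : ℝ => t ^ n * Real.exp (-t) / (n.factorial : ℝ)) (Set.Ioi 0) := by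
  have h : IntegrableOn (fun x : ℝ => Real.exp (-x) * x ^ ((n : ℝ) + 1 - 1)) (Set.Ioi 0) :=
    Real.GammaIntegral_convergent (by positivity)
  have h2 : IntegrableOn (fun x : ℝ => Real.exp (-x) * x ^ ((n : ℝ) + 1 - 1) / (n.factorial : ℝ)) (Set.Ioi 0) := h.div_const _
  refine h2.congr_fun ?_ measurableSet_Ioi
  intro t ht
  simp only [Set.mem_Ioi] at ht
  simp only [add_sub_cancel_right, Real.rpow_natCast]
  ring

lemma f_integral (n : ℕ) :
    ∫ t in Set.Ioi (0 : ℝ), t ^ n * Real.exp (-t) / (n.factorial : ℝ) = 1 := by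
  have h1 : Real.Gamma ((n : ℝ) + 1) = ∫ x in Set.Ioi (0:ℝ), Real.exp (-x) * x ^ ((n : ℝ) + 1 - 1) :=
    Real.Gamma_eq_integral (by positivity)
  have h2 : Real.Gamma ((n : ℝ) + 1) = (n.factorial : ℝ) := Real.Gamma_nat_eq_factorial n
  have h3 : ∫ x in Set.Ioi (0:ℝ), Real.exp (-x) * x ^ ((n : ℝ) + 1 - 1)
      = ∫ x in Set.Ioi (0:ℝ), x ^ n * Real.exp (-x) := by
    refine setIntegral_congr_fun measurableSet_Ioi fun t ht => ?_
    simp only [Set.mem_Ioi] at ht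
    simp only [add_sub_cancel_right, Real.rpow_natCast]
    ring
  have h4 : ∫ x in Set.Ioi (0:ℝ), x ^ n * Real.exp (-x) = (n.factorial : ℝ) := by
    rw [← h3, ← h1, h2]
  rw [integral_div, h4, div_self (by positivity)]

lemma f_lintegral (n : ℕ) :
    ∫⁻ t in Set.Ioi (0 : ℝ), ENNReal.ofReal (t ^ n * Real.exp (-t) / (n.factorial : ℝ)) = 1 := by
  rw [← ofReal_integral_eq_lintegral_ofReal (f_integrableOn n) ?_, f_integral n,
    ENNReal.ofReal_one]
  filter_upwards [ae_restrict_mem measurableSet_Ioi] with t ht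
  have : (0:ℝ) < t := ht
  positivity

lemma f_tsum {t : ℝ} (ht : 0 ≤ t) :
    ∑' n : ℕ, ENNReal.ofReal (t ^ n * Real.exp (-t) / (n.factorial : ℝ)) = 1 := by
  have hsummable : Summable (fun n : ℕ => t ^ n * Real.exp (-t) / (n.factorial : ℝ)) := by
    have := (Real.summable_pow_div_factorial t).mul_right (Real.exp (-t))
    refine this.congr fun n => ?_
    ring
  rw [← ENNReal.ofReal_tsum_of_nonneg (fun n => by positivity) hsummable]
  have hexp : ∑' n : ℕ, t ^ n / (n.factorial : ℝ) = Real.exp t := by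
    rw [Real.exp_eq_exp_ℝ, NormedSpace.exp_eq_tsum_div]
  have : ∑' n : ℕ, t ^ n * Real.exp (-t) / (n.factorial : ℝ)
      = (∑' n : ℕ, t ^ n / (n.factorial : ℝ)) * Real.exp (-t) := by
    rw [← tsum_mul_right]
    exact tsum_congr fun n => by ring
  rw [this, hexp, ← Real.exp_add, add_neg_cancel, Real.exp_zero, ENNReal.ofReal_one]

end JensenAux


/-- Jensen-inequality core of Lemma 3(i): if `g : [0,∞) → X` is strongly measurable with
`∫₀^∞ ‖g(t)‖^p dt < ∞` and `t ↦ g(τt) fₙ(t)` is Bochner integrable for every `n ≥ 1`,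
where `fₙ(t) = t^{n-1} e^{-t}/(n-1)!`, then
`∑_{n=1}^∞ τ ‖∫₀^∞ g(τt) fₙ(t) dt‖^p ≤ ∫₀^∞ ‖g(t)‖^p dt`.
(The sum over `n ≥ 1` is reindexed as a sum over `n : ℕ` with `f_{n+1}(t) = tⁿ e^{-t}/n!`.) -/
theorem jensen_sum_le_integral {X : Type*} [NormedAddCommGroup X] [NormedSpace ℝ X]
    [CompleteSpace X]
    (p : ℝ) (hp : 1 ≤ p) (τ : ℝ) (hτ : 0 < τ) (g : ℝ → X)
    (hg : MeasureTheory.StronglyMeasurable g)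
    (hgp : MeasureTheory.IntegrableOn (fun t => ‖g t‖ ^ p) (Set.Ioi 0))
    (hint : ∀ n : ℕ, MeasureTheory.IntegrableOn
      (fun t => (t ^ n * Real.exp (-t) / (n.factorial : ℝ)) • g (τ * t)) (Set.Ioi 0)) :
    ∑' n : ℕ,
        τ * ‖∫ t in Set.Ioi (0 : ℝ),
              (t ^ n * Real.exp (-t) / (n.factorial : ℝ)) • g (τ * t)‖ ^ p
      ≤ ∫ t in Set.Ioi (0 : ℝ), ‖g t‖ ^ p := by
  have hp0 : (0:ℝ) < p := lt_of_lt_of_le one_pos hp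
  set ν : Measure ℝ := volume.restrict (Set.Ioi 0) with hνdef
  set h : ℝ → X := fun t => g (τ * t) with hhdef
  have hmeas_h : StronglyMeasurable h := hg.comp_measurable (measurable_const_mul τ)
  set d : ℕ → ℝ → ℝ≥0∞ :=
    fun n t => ENNReal.ofReal (t ^ n * Real.exp (-t) / (n.factorial : ℝ)) with hddef
  have hdmeas : ∀ n : ℕ, Measurable (d n) := by
    intro n
    apply Measurable.ennreal_ofReal
    fun_prop
  have hE : Measurable fun t : ℝ => (‖h t‖₊ : ℝ≥0∞) ^ p :=
    (hmeas_h.enorm).pow_const p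
  set μ : ℕ → Measure ℝ := fun n => ν.withDensity (d n) with hμdef
  have hprob : ∀ n, IsProbabilityMeasure (μ n) := by
    intro n
    constructor
    rw [hμdef]
    simp only
    rw [withDensity_apply _ MeasurableSet.univ, Measure.restrict_univ]
    exact JensenAux.f_lintegral n
  -- the key per-n estimate
  have key : ∀ n : ℕ,
      ENNReal.ofReal (‖∫ t in Set.Ioi (0 : ℝ),
          (t ^ n * Real.exp (-t) / (n.factorial : ℝ)) • g (τ * t)‖ ^ p)
        ≤ ∫⁻ t, d n t * (‖h t‖₊ : ℝ≥0∞) ^ p ∂ν := by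
    intro n
    haveI := hprob n
    -- step 1 : ofReal ‖I‖ ≤ ∫⁻ ‖h‖₊ ∂ μ n
    have step1 : ENNReal.ofReal (‖∫ t in Set.Ioi (0 : ℝ),
          (t ^ n * Real.exp (-t) / (n.factorial : ℝ)) • g (τ * t)‖)
        ≤ ∫⁻ t, (‖h t‖₊ : ℝ≥0∞) ∂(μ n) := by
      have h1 : ENNReal.ofReal (‖∫ t in Set.Ioi (0 : ℝ),
            (t ^ n * Real.exp (-t) / (n.factorial : ℝ)) • g (τ * t)‖)
          ≤ ENNReal.ofReal (∫ t in Set.Ioi (0 : ℝ),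
            ‖(t ^ n * Real.exp (-t) / (n.factorial : ℝ)) • g (τ * t)‖) :=
        ENNReal.ofReal_le_ofReal (norm_integral_le_integral_norm _)
      have h2 : ENNReal.ofReal (∫ t in Set.Ioi (0 : ℝ),
            ‖(t ^ n * Real.exp (-t) / (n.factorial : ℝ)) • g (τ * t)‖)
          = ∫⁻ t, (‖(t ^ n * Real.exp (-t) / (n.factorial : ℝ)) • g (τ * t)‖₊ : ℝ≥0∞) ∂ν :=
        ofReal_integral_norm_eq_lintegral_enorm (hint n)
      have h3 : ∫⁻ t, (‖(t ^ n * Real.exp (-t) / (n.factorial : ℝ)) • g (τ * t)‖₊ : ℝ≥0∞) ∂ν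
          = ∫⁻ t, d n t * (‖h t‖₊ : ℝ≥0∞) ∂ν := by
        refine lintegral_congr_ae ?_
        filter_upwards [ae_restrict_mem measurableSet_Ioi] with t ht
        have ht' : (0:ℝ) < t := ht
        have hnn : (0:ℝ) ≤ t ^ n * Real.exp (-t) / (n.factorial : ℝ) := by positivity
        rw [nnnorm_smul, ENNReal.coe_mul,
          ← enorm_eq_nnnorm (t ^ n * Real.exp (-t) / (n.factorial : ℝ)), Real.enorm_eq_ofReal hnn]
      have h4 : ∫⁻ t, d n t * (‖h t‖₊ : ℝ≥0∞) ∂ν = ∫⁻ t, (‖h t‖₊ : ℝ≥0∞) ∂(μ n) := by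
        rw [hμdef]
        simp only
        rw [lintegral_withDensity_eq_lintegral_mul _ (hdmeas n) (g := fun t => (‖h t‖₊ : ℝ≥0∞)) hmeas_h.enorm]
        rfl
      calc ENNReal.ofReal (‖∫ t in Set.Ioi (0 : ℝ),
            (t ^ n * Real.exp (-t) / (n.factorial : ℝ)) • g (τ * t)‖)
          ≤ ENNReal.ofReal (∫ t in Set.Ioi (0 : ℝ),
            ‖(t ^ n * Real.exp (-t) / (n.factorial : ℝ)) • g (τ * t)‖) := h1
        _ = ∫⁻ t, (‖(t ^ n * Real.exp (-t) / (n.factorial : ℝ)) • g (τ * t)‖₊ : ℝ≥0∞) ∂ν := h2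
        _ = ∫⁻ t, d n t * (‖h t‖₊ : ℝ≥0∞) ∂ν := h3
        _ = ∫⁻ t, (‖h t‖₊ : ℝ≥0∞) ∂(μ n) := h4
    -- step 2 : Jensen via Lp-monotonicity on the probability measure μ n
    have jensen : ∫⁻ t, (‖h t‖₊ : ℝ≥0∞) ∂(μ n)
        ≤ (∫⁻ t, (‖h t‖₊ : ℝ≥0∞) ^ p ∂(μ n)) ^ (1 / p) := by
      have hae : AEStronglyMeasurable h (μ n) := hmeas_h.aestronglyMeasurable
      have := eLpNorm_le_eLpNorm_of_exponent_le (μ := μ n) (f := h)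
        (ENNReal.one_le_ofReal.mpr hp) hae
      rw [eLpNorm_one_eq_lintegral_enorm, eLpNorm_eq_lintegral_rpow_enorm_toReal
        (ENNReal.ofReal_pos.mpr hp0).ne' ENNReal.ofReal_ne_top, ENNReal.toReal_ofReal hp0.le] at this
      exact this
    calc ENNReal.ofReal (‖∫ t in Set.Ioi (0 : ℝ),
          (t ^ n * Real.exp (-t) / (n.factorial : ℝ)) • g (τ * t)‖ ^ p)
        = (ENNReal.ofReal (‖∫ t in Set.Ioi (0 : ℝ),
          (t ^ n * Real.exp (-t) / (n.factorial : ℝ)) • g (τ * t)‖)) ^ p :=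
          (ENNReal.ofReal_rpow_of_nonneg (norm_nonneg _) hp0.le).symm
      _ ≤ (∫⁻ t, (‖h t‖₊ : ℝ≥0∞) ∂(μ n)) ^ p := ENNReal.rpow_le_rpow step1 hp0.le
      _ ≤ ((∫⁻ t, (‖h t‖₊ : ℝ≥0∞) ^ p ∂(μ n)) ^ (1 / p)) ^ p :=
          ENNReal.rpow_le_rpow jensen hp0.le
      _ = ∫⁻ t, (‖h t‖₊ : ℝ≥0∞) ^ p ∂(μ n) := by
          rw [← ENNReal.rpow_mul, one_div_mul_cancel hp0.ne', ENNReal.rpow_one]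
      _ = ∫⁻ t, d n t * (‖h t‖₊ : ℝ≥0∞) ^ p ∂ν := by
          rw [hμdef]
          simp only
          rw [lintegral_withDensity_eq_lintegral_mul _ (hdmeas n) hE]
          rfl
  -- summing the densities
  have sum_eq : ∑' n : ℕ, ∫⁻ t, d n t * (‖h t‖₊ : ℝ≥0∞) ^ p ∂ν
      = ∫⁻ t, (‖h t‖₊ : ℝ≥0∞) ^ p ∂ν := by
    rw [← lintegral_tsum (f := fun n t => d n t * (‖h t‖₊ : ℝ≥0∞) ^ p)
      (fun n => ((hdmeas n).mul hE).aemeasurable)]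
    refine lintegral_congr_ae ?_
    filter_upwards [ae_restrict_mem measurableSet_Ioi] with t ht
    have ht' : (0:ℝ) < t := ht
    rw [ENNReal.tsum_mul_right, JensenAux.f_tsum ht'.le, one_mul]
  -- change of variables
  have cov : ∫⁻ t, (‖h t‖₊ : ℝ≥0∞) ^ p ∂ν
      = ENNReal.ofReal τ⁻¹ * ∫⁻ t, (‖g t‖₊ : ℝ≥0∞) ^ p ∂ν := by
    have hk : Measurable fun t : ℝ => (‖g t‖₊ : ℝ≥0∞) ^ p :=
      (hg.enorm).pow_const p
    have hmul : Measurable fun x : ℝ => τ * x := measurable_const_mul τ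
    have hpre : (fun x : ℝ => τ * x) ⁻¹' (Set.Ioi 0) = Set.Ioi 0 := by
      ext x
      simp only [Set.mem_preimage, Set.mem_Ioi]
      constructor
      · intro hx; nlinarith
      · intro hx; positivity
    have h1 : ∫⁻ t, (‖h t‖₊ : ℝ≥0∞) ^ p ∂ν
        = ∫⁻ x, (‖g x‖₊ : ℝ≥0∞) ^ p ∂((volume.restrict ((fun x : ℝ => τ * x) ⁻¹' (Set.Ioi 0))).map
            (fun x : ℝ => τ * x)) := by
      rw [lintegral_map hk hmul, hpre, ← hνdef]
    rw [h1, ← Measure.restrict_map hmul measurableSet_Ioi, Real.map_volume_mul_left hτ.ne',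
      Measure.restrict_smul, lintegral_smul_measure, abs_of_pos (inv_pos.mpr hτ), hνdef, smul_eq_mul]
  -- convert RHS to a lintegral
  have hL : ∫⁻ t, (‖g t‖₊ : ℝ≥0∞) ^ p ∂ν
      = ENNReal.ofReal (∫ t in Set.Ioi (0:ℝ), ‖g t‖ ^ p) := by
    rw [ofReal_integral_eq_lintegral_ofReal hgp ?_]
    · refine lintegral_congr fun t => ?_
      rw [← ENNReal.ofReal_rpow_of_nonneg (norm_nonneg _) hp0.le, ofReal_norm, enorm_eq_nnnorm]
    · filter_upwards with t
      exact Real.rpow_nonneg (norm_nonneg _) p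
  -- the master ENNReal inequality
  have master : ∑' n : ℕ, ENNReal.ofReal (τ * ‖∫ t in Set.Ioi (0 : ℝ),
        (t ^ n * Real.exp (-t) / (n.factorial : ℝ)) • g (τ * t)‖ ^ p)
      ≤ ENNReal.ofReal (∫ t in Set.Ioi (0:ℝ), ‖g t‖ ^ p) := by
    have e1 : ∀ n : ℕ, ENNReal.ofReal (τ * ‖∫ t in Set.Ioi (0 : ℝ),
          (t ^ n * Real.exp (-t) / (n.factorial : ℝ)) • g (τ * t)‖ ^ p)
        = ENNReal.ofReal τ * ENNReal.ofReal (‖∫ t in Set.Ioi (0 : ℝ),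
          (t ^ n * Real.exp (-t) / (n.factorial : ℝ)) • g (τ * t)‖ ^ p) := fun n =>
      ENNReal.ofReal_mul hτ.le
    calc ∑' n : ℕ, ENNReal.ofReal (τ * ‖∫ t in Set.Ioi (0 : ℝ),
          (t ^ n * Real.exp (-t) / (n.factorial : ℝ)) • g (τ * t)‖ ^ p)
        = ENNReal.ofReal τ * ∑' n : ℕ, ENNReal.ofReal (‖∫ t in Set.Ioi (0 : ℝ),
          (t ^ n * Real.exp (-t) / (n.factorial : ℝ)) • g (τ * t)‖ ^ p) := by
          rw [← ENNReal.tsum_mul_left]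
          exact tsum_congr e1
      _ ≤ ENNReal.ofReal τ * ∑' n : ℕ, ∫⁻ t, d n t * (‖h t‖₊ : ℝ≥0∞) ^ p ∂ν :=
          mul_le_mul_right (ENNReal.tsum_le_tsum key) _
      _ = ENNReal.ofReal τ * (ENNReal.ofReal τ⁻¹ * ∫⁻ t, (‖g t‖₊ : ℝ≥0∞) ^ p ∂ν) := by
          rw [sum_eq, cov]
      _ = ∫⁻ t, (‖g t‖₊ : ℝ≥0∞) ^ p ∂ν := by
          rw [← mul_assoc, ← ENNReal.ofReal_mul hτ.le, mul_inv_cancel₀ hτ.ne',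
            ENNReal.ofReal_one, one_mul]
      _ = ENNReal.ofReal (∫ t in Set.Ioi (0:ℝ), ‖g t‖ ^ p) := hL
  -- back to the reals
  have ha : ∀ n : ℕ, 0 ≤ τ * ‖∫ t in Set.Ioi (0 : ℝ),
      (t ^ n * Real.exp (-t) / (n.factorial : ℝ)) • g (τ * t)‖ ^ p := fun n =>
    mul_nonneg hτ.le (Real.rpow_nonneg (norm_nonneg _) p)
  have hC : 0 ≤ ∫ t in Set.Ioi (0:ℝ), ‖g t‖ ^ p :=
    integral_nonneg fun t => Real.rpow_nonneg (norm_nonneg _) p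
  have hne : ∑' n : ℕ, ENNReal.ofReal (τ * ‖∫ t in Set.Ioi (0 : ℝ),
      (t ^ n * Real.exp (-t) / (n.factorial : ℝ)) • g (τ * t)‖ ^ p) ≠ ∞ :=
    ne_top_of_le_ne_top ENNReal.ofReal_ne_top master
  have hsum : Summable fun n : ℕ => τ * ‖∫ t in Set.Ioi (0 : ℝ),
      (t ^ n * Real.exp (-t) / (n.factorial : ℝ)) • g (τ * t)‖ ^ p := by
    have := ENNReal.summable_toReal hne
    refine this.congr fun n => ?_
    rw [ENNReal.toReal_ofReal (ha n)]
  refine (ENNReal.ofReal_le_ofReal_iff hC).mp ?_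
  rw [ENNReal.ofReal_tsum_of_nonneg ha hsum]
  exact master
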